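/- For any x ∈ int(K), with X = mat(x): (a) X − T_x = U_x, where U_x is block diagonal with i-th block equal to the matrix with zero first row and column and lower-right block (x^{(i)}_1 − β_{x^{(i)}}) P_{x^{(i)}}, where P_v = I − v_{2:m}v_{2:m}ᵀ/‖v_{2:m}‖² is the orthogonal projection onto the complement of v_{2:m} (and the block is zero when v_{2:m} = 0); (b) T_x X^{−1} = X^{−1} T_x = blkdiag(I − U_{x^{(i)}}/x^{(i)}_1 : i = 1, …, k) and T_x X^{−1} e = e; (c) X and T_x commute and X − T_x is positive semidefinite. -/

import Mathlib

open scoped BigOperators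
open Matrix

namespace SOCP

/-- Index type for a block vector with `k` blocks, block `i` having dimension `d i + 1`. -/
abbrev Idx {k : ℕ} (d : Fin k → ℕ) : Type := (i : Fin k) × Fin (d i + 1)

/-- The `i`-th block of a block vector. -/
def blk {k : ℕ} {d : Fin k → ℕ} (v : Idx d → ℝ) (i : Fin k) : Fin (d i + 1) → ℝ :=
  fun j => v ⟨i, j⟩

/-- Squared Euclidean norm of the tail `u_{2:m}` of a single block. -/
def tailNormSq {m : ℕ} (u : Fin (m + 1) → ℝ) : ℝ := ∑ j : Fin m, u j.succ ^ 2

/-- Euclidean norm of the tail `u_{2:m}` of a single block. -/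
noncomputable def tailNorm {m : ℕ} (u : Fin (m + 1) → ℝ) : ℝ := Real.sqrt (tailNormSq u)

/-- Membership in the cone `K` (a direct product of second-order cones). -/
def inK {k : ℕ} {d : Fin k → ℕ} (v : Idx d → ℝ) : Prop :=
  ∀ i : Fin k, tailNorm (blk v i) ≤ v ⟨i, 0⟩

/-- Membership in the interior of the cone `K`. -/
def inIntK {k : ℕ} {d : Fin k → ℕ} (v : Idx d → ℝ) : Prop :=
  ∀ i : Fin k, tailNorm (blk v i) < v ⟨i, 0⟩

/-- Euclidean inner product of vectors. -/
def dotV {ι : Type*} [Fintype ι] (u v : ι → ℝ) : ℝ := ∑ a, u a * v a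

/-- Euclidean norm of a vector. -/
noncomputable def vnorm {ι : Type*} [Fintype ι] (v : ι → ℝ) : ℝ :=
  Real.sqrt (∑ a, v a ^ 2)

/-- Blockwise Jordan product. -/
def jmul {k : ℕ} {d : Fin k → ℕ} (u v : Idx d → ℝ) : Idx d → ℝ := fun a =>
  if a.2 = 0 then ∑ j, u ⟨a.1, j⟩ * v ⟨a.1, j⟩
  else u ⟨a.1, 0⟩ * v a + v ⟨a.1, 0⟩ * u a

/-- The unit element `e` of the Jordan algebra. -/
def unitE {k : ℕ} {d : Fin k → ℕ} : Idx d → ℝ := fun a => if a.2 = 0 then 1 else 0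

/-- `λ_min` of the `i`-th block. -/
noncomputable def lamMin {k : ℕ} {d : Fin k → ℕ} (v : Idx d → ℝ) (i : Fin k) : ℝ :=
  v ⟨i, 0⟩ - tailNorm (blk v i)

/-- `λ_max` of the `i`-th block. -/
noncomputable def lamMax {k : ℕ} {d : Fin k → ℕ} (v : Idx d → ℝ) (i : Fin k) : ℝ :=
  v ⟨i, 0⟩ + tailNorm (blk v i)

/-- Arrow-head matrix of a single block. -/
def arrowBlk {m : ℕ} (u : Fin (m + 1) → ℝ) : Matrix (Fin (m + 1)) (Fin (m + 1)) ℝ :=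
  Matrix.of fun j j' =>
    if j = 0 then u j' else if j' = 0 then u j else if j = j' then u 0 else 0

/-- Arrow-head matrix `mat(v)` (block diagonal). -/
def matV {k : ℕ} {d : Fin k → ℕ} (v : Idx d → ℝ) : Matrix (Idx d) (Idx d) ℝ :=
  Matrix.blockDiagonal' fun i => arrowBlk (blk v i)

/-- `β_u = sqrt(u_1^2 - ‖u_{2:m}‖^2)` for a single block. -/
noncomputable def betaOf {m : ℕ} (u : Fin (m + 1) → ℝ) : ℝ :=
  Real.sqrt (u 0 ^ 2 - tailNormSq u)

/-- The matrix `T_u` for a single block. -/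
noncomputable def Tblk {m : ℕ} (u : Fin (m + 1) → ℝ) :
    Matrix (Fin (m + 1)) (Fin (m + 1)) ℝ :=
  Matrix.of fun j j' =>
    if j = 0 then u j'
    else if j' = 0 then u j
    else (if j = j' then betaOf u else 0) + u j * u j' / (betaOf u + u 0)

/-- The matrix `T_x` (block diagonal). -/
noncomputable def TV {k : ℕ} {d : Fin k → ℕ} (x : Idx d → ℝ) :
    Matrix (Idx d) (Idx d) ℝ :=
  Matrix.blockDiagonal' fun i => Tblk (blk x i)

/-- `w_{xs} = T_x s`. -/
noncomputable def wxs {k : ℕ} {d : Fin k → ℕ} (x s : Idx d → ℝ) : Idx d → ℝ :=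
  (TV x).mulVec s

/-- Central-path coefficient `μ(x,s) = xᵀs/k`. -/
noncomputable def muV {k : ℕ} {d : Fin k → ℕ} (x s : Idx d → ℝ) : ℝ :=
  dotV x s / (k : ℝ)

/-- Central-path distance `d_2(x,s) = √2 ‖w_{xs} - μ e‖`. -/
noncomputable def d2 {k : ℕ} {d : Fin k → ℕ} (x s : Idx d → ℝ) : ℝ :=
  Real.sqrt 2 * vnorm (wxs x s - muV x s • unitE)

/-- Central-path distance `d_∞(x,s)`. -/
noncomputable def dInf {k : ℕ} {d : Fin k → ℕ} (x s : Idx d → ℝ) : ℝ :=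
  ⨆ i : Fin k, max |lamMax (wxs x s) i - muV x s| |lamMin (wxs x s) i - muV x s|

/-- The matrix `Q = diag(1, -I)` for a single block. -/
def Qblk {m : ℕ} : Matrix (Fin (m + 1)) (Fin (m + 1)) ℝ :=
  Matrix.of fun j j' => if j = j' then (if j = 0 then (1 : ℝ) else -1) else 0

/-- The scaling group `G` of block matrices `Θ G` with `(Gⁱ)ᵀ Qⁱ Gⁱ = Qⁱ`. -/
def scalingGroup {k : ℕ} (d : Fin k → ℕ) : Set (Matrix (Idx d) (Idx d) ℝ) :=
  { D | ∃ (θ : Fin k → ℝ) (G : ∀ i, Matrix (Fin (d i + 1)) (Fin (d i + 1)) ℝ),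
      (∀ i, 0 < θ i) ∧ (∀ i, (G i)ᵀ * Qblk * G i = Qblk) ∧
      D = Matrix.blockDiagonal' fun i => θ i • G i }

/-- Operator 2-norm of a matrix. -/
noncomputable def op2 {m n : Type*} [Fintype m] [Fintype n] [DecidableEq n]
    (M : Matrix m n ℝ) : ℝ :=
  ‖LinearMap.toContinuousLinearMap (Matrix.toEuclideanLin M)‖

/-- `R_{xs} = T_x X⁻¹ S T_x`. -/
noncomputable def Rxs {k : ℕ} {d : Fin k → ℕ} (x s : Idx d → ℝ) :
    Matrix (Idx d) (Idx d) ℝ :=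
  TV x * (matV x)⁻¹ * matV s * TV x

/-- The scaled Newton system of the infeasible IPM (Monteiro–Zhang family). -/
def NewtonSys {k p : ℕ} {d : Fin k → ℕ} (A : Matrix (Fin p) (Idx d) ℝ)
    (Cm : Matrix (Idx d) (Idx d) ℝ) (x : Idx d → ℝ) (y : Fin p → ℝ) (s : Idx d → ℝ)
    (ν : ℝ) (D : Matrix (Idx d) (Idx d) ℝ)
    (dx : Idx d → ℝ) (dy : Fin p → ℝ) (ds : Idx d → ℝ) : Prop :=
  A.mulVec dx = -((1 - ν) • A.mulVec x) ∧
  Aᵀ.mulVec dy + Cm.mulVec dx + ds =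
    -((1 - ν) • (Aᵀ.mulVec y + Cm.mulVec x + s)) ∧
  (matV ((D⁻¹)ᵀ.mulVec x)).mulVec (D.mulVec ds)
      + (matV (D.mulVec s)).mulVec ((D⁻¹)ᵀ.mulVec dx)
    = (ν * muV x s) • unitE - jmul ((D⁻¹)ᵀ.mulVec x) (D.mulVec s)

/-- Central-path neighborhood `N_2(γ)`. -/
def N2 {k : ℕ} (d : Fin k → ℕ) (p : ℕ) (γ : ℝ) :
    Set ((Idx d → ℝ) × (Fin p → ℝ) × (Idx d → ℝ)) :=
  { z | inIntK z.1 ∧ inIntK z.2.2 ∧ d2 z.1 z.2.2 ≤ γ * muV z.1 z.2.2 }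

/-- Central-path neighborhood `N_∞(γ)`. -/
def NInf {k : ℕ} (d : Fin k → ℕ) (p : ℕ) (γ : ℝ) :
    Set ((Idx d → ℝ) × (Fin p → ℝ) × (Idx d → ℝ)) :=
  { z | inIntK z.1 ∧ inIntK z.2.2 ∧ dInf z.1 z.2.2 ≤ γ * muV z.1 z.2.2 }

/-- The matrix `U_u` for a single block: zero first row and column and lower-right block
`(u_1 - β_u) P_u`, with `P_u` the projection onto the complement of the tail of `u`
(zero when the tail vanishes). -/
noncomputable def Ublk {m : ℕ} (u : Fin (m + 1) → ℝ) :
    Matrix (Fin (m + 1)) (Fin (m + 1)) ℝ :=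
  Matrix.of fun j j' =>
    if j = 0 ∨ j' = 0 then 0
    else if tailNormSq u = 0 then 0
    else (u 0 - betaOf u) * ((if j = j' then (1 : ℝ) else 0) - u j * u j' / tailNormSq u)

/-- The block-diagonal matrix `U_x`. -/
noncomputable def UV {k : ℕ} {d : Fin k → ℕ} (x : Idx d → ℝ) :
    Matrix (Idx d) (Idx d) ℝ :=
  Matrix.blockDiagonal' fun i => Ublk (blk x i)

/-- `Γ_p = 2 (γ²/2 + (1-ν)² k)^{1/2} / (1 - 3γ)`. -/
noncomputable def GammaP (γ ν : ℝ) (k : ℕ) : ℝ :=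
  2 * Real.sqrt (γ ^ 2 / 2 + (1 - ν) ^ 2 * k) / (1 - 3 * γ)

/-- `Γ̃ = (4(γ² + δ²)/(1-3γ)²) (1 - δ/√(2k))⁻¹`. -/
noncomputable def GammaTilde (γ δ : ℝ) (k : ℕ) : ℝ :=
  4 * (γ ^ 2 + δ ^ 2) / (1 - 3 * γ) ^ 2 * (1 - δ / Real.sqrt (2 * k))⁻¹

/-! ### Auxiliary lemmas for Lemma 1 -/

section AuxBlock

variable {m : ℕ}

lemma tailNormSq_nonneg (u : Fin (m + 1) → ℝ) : 0 ≤ tailNormSq u :=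
  Finset.sum_nonneg fun _ _ => sq_nonneg _

lemma tail_eq_zero {u : Fin (m + 1) → ℝ} (h : tailNormSq u = 0) (j : Fin m) :
    u j.succ = 0 := by
  have h2 := (Finset.sum_eq_zero_iff_of_nonneg
    (fun i (_ : i ∈ Finset.univ) => sq_nonneg (u i.succ))).1 h j (Finset.mem_univ j)
  exact pow_eq_zero_iff (two_ne_zero) |>.1 h2

lemma tail_eq_zero' {u : Fin (m + 1) → ℝ} (h : tailNormSq u = 0) {j : Fin (m + 1)}
    (hj : j ≠ 0) : u j = 0 := by
  obtain ⟨a, rfl⟩ := Fin.exists_succ_eq_of_ne_zero hj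
  exact tail_eq_zero h a

lemma u0_pos {u : Fin (m + 1) → ℝ} (hu : tailNorm u < u 0) : 0 < u 0 :=
  lt_of_le_of_lt (Real.sqrt_nonneg _) hu

lemma tailNormSq_lt {u : Fin (m + 1) → ℝ} (hu : tailNorm u < u 0) :
    tailNormSq u < u 0 ^ 2 := by
  have h0 := tailNormSq_nonneg u
  have hs : Real.sqrt (tailNormSq u) * Real.sqrt (tailNormSq u) = tailNormSq u :=
    Real.mul_self_sqrt h0
  have hn : 0 ≤ Real.sqrt (tailNormSq u) := Real.sqrt_nonneg _
  have hu' : Real.sqrt (tailNormSq u) < u 0 := hu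
  nlinarith

lemma beta_sq {u : Fin (m + 1) → ℝ} (hu : tailNorm u < u 0) :
    betaOf u ^ 2 = u 0 ^ 2 - tailNormSq u :=
  Real.sq_sqrt (by have := tailNormSq_lt hu; linarith)

lemma beta_pos {u : Fin (m + 1) → ℝ} (hu : tailNorm u < u 0) : 0 < betaOf u :=
  Real.sqrt_pos.2 (by have := tailNormSq_lt hu; linarith)

lemma beta_le {u : Fin (m + 1) → ℝ} (hu : tailNorm u < u 0) : betaOf u ≤ u 0 := by
  rw [betaOf]
  calc Real.sqrt (u 0 ^ 2 - tailNormSq u) ≤ Real.sqrt (u 0 ^ 2) :=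
        Real.sqrt_le_sqrt (by linarith [tailNormSq_nonneg u])
    _ = u 0 := Real.sqrt_sq (u0_pos hu).le

lemma tailNormSq_eq {u : Fin (m + 1) → ℝ} (hu : tailNorm u < u 0) :
    tailNormSq u = u 0 ^ 2 - betaOf u ^ 2 := by
  have := beta_sq hu; linarith

lemma beta_key {u : Fin (m + 1) → ℝ} (hu : tailNorm u < u 0) :
    (betaOf u + u 0) * (u 0 - betaOf u) = tailNormSq u := by
  have h := beta_sq hu
  nlinarith

lemma beta_of_tail_zero {u : Fin (m + 1) → ℝ} (hu : tailNorm u < u 0)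
    (ht : tailNormSq u = 0) : betaOf u = u 0 := by
  have h0 := u0_pos hu
  rw [betaOf, ht, sub_zero, Real.sqrt_sq h0.le]

lemma arrowBlk_transpose (u : Fin (m + 1) → ℝ) : (arrowBlk u)ᵀ = arrowBlk u := by
  ext j j'
  simp only [Matrix.transpose_apply, arrowBlk, Matrix.of_apply]
  split_ifs <;> subst_vars <;> first | rfl | tauto

lemma Ublk_transpose (u : Fin (m + 1) → ℝ) : (Ublk u)ᵀ = Ublk u := by
  ext j j'
  simp only [Matrix.transpose_apply, Ublk, Matrix.of_apply]
  split_ifs <;> subst_vars <;> first | rfl | tauto | ring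

lemma arrow_sub_T {u : Fin (m + 1) → ℝ} (hu : tailNorm u < u 0) :
    arrowBlk u - Tblk u = Ublk u := by
  ext j j'
  simp only [Matrix.sub_apply, arrowBlk, Tblk, Ublk, Matrix.of_apply]
  rcases eq_or_ne j 0 with rfl | hj
  · simp
  rcases eq_or_ne j' 0 with rfl | hj'
  · simp [hj]
  simp only [hj, hj', or_self, if_false, if_neg hj, if_neg hj']
  rcases eq_or_ne (tailNormSq u) 0 with ht | ht
  · rw [if_pos ht, beta_of_tail_zero hu ht, tail_eq_zero' ht hj]
    split_ifs <;> ring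
  · rw [if_neg ht]
    have h0 := u0_pos hu
    have hβ := beta_pos hu
    have hne : betaOf u + u 0 ≠ 0 := ne_of_gt (by linarith)
    have hdiv : u j * u j' / (betaOf u + u 0)
        = (u 0 - betaOf u) * (u j * u j') / tailNormSq u := by
      rw [div_eq_div_iff hne ht]
      linear_combination (u j * u j') * (beta_key hu).symm
    rw [hdiv]
    split_ifs <;> ring

lemma arrow_mul_U {u : Fin (m + 1) → ℝ} (hu : tailNorm u < u 0) :
    arrowBlk u * Ublk u = u 0 • Ublk u := by
  ext j j'
  rw [Matrix.mul_apply, Matrix.smul_apply, smul_eq_mul, Fin.sum_univ_succ]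
  have h0 : Ublk u 0 j' = 0 := by simp [Ublk]
  rw [h0, mul_zero, zero_add]
  refine Fin.cases ?_ (fun a => ?_) j
  · rw [h0, mul_zero]
    have harr : ∀ l : Fin m, arrowBlk u 0 l.succ = u l.succ := fun l => by simp [arrowBlk]
    simp only [harr]
    rcases eq_or_ne j' 0 with rfl | hj'
    · exact Finset.sum_eq_zero fun l _ => by simp [Ublk]
    rcases eq_or_ne (tailNormSq u) 0 with ht | ht
    · exact Finset.sum_eq_zero fun l _ => by
        simp [Ublk, ht, Fin.succ_ne_zero, hj']
    obtain ⟨b, rfl⟩ := Fin.exists_succ_eq_of_ne_zero hj'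
    have hent : ∀ l : Fin m, u l.succ * Ublk u l.succ b.succ
        = (if l = b then (u 0 - betaOf u) * u b.succ else 0)
          - ((u 0 - betaOf u) * u b.succ / tailNormSq u) * u l.succ ^ 2 := by
      intro l
      simp only [Ublk, Matrix.of_apply, Fin.succ_ne_zero, or_self, if_false, if_neg ht,
        Fin.succ_inj]
      split_ifs with h
      · subst h; ring
      · ring
    rw [Finset.sum_congr rfl fun l _ => hent l, Finset.sum_sub_distrib,
      Finset.sum_ite_eq' Finset.univ b, ← Finset.mul_sum]
    simp only [Finset.mem_univ, if_true]
    have : ∑ l : Fin m, u l.succ ^ 2 = tailNormSq u := rfl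
    rw [this, div_mul_cancel₀ _ ht]
    ring
  · have harr : ∀ l : Fin m, arrowBlk u a.succ l.succ = if a = l then u 0 else 0 :=
      fun l => by simp [arrowBlk, Fin.succ_ne_zero, Fin.succ_inj]
    simp only [harr, ite_mul, zero_mul]
    rw [Finset.sum_ite_eq Finset.univ a fun l => u 0 * Ublk u l.succ j']
    simp

lemma U_mul_arrow {u : Fin (m + 1) → ℝ} (hu : tailNorm u < u 0) :
    Ublk u * arrowBlk u = u 0 • Ublk u := by
  have h := congrArg Matrix.transpose (arrow_mul_U hu)
  rwa [Matrix.transpose_mul, Matrix.transpose_smul, Ublk_transpose, arrowBlk_transpose] at h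

/-- Explicit inverse of the arrow-head matrix. -/
noncomputable def Wblk (u : Fin (m + 1) → ℝ) : Matrix (Fin (m + 1)) (Fin (m + 1)) ℝ :=
  Matrix.of fun j j' =>
    if j = 0 then (if j' = 0 then u 0 / betaOf u ^ 2 else -(u j') / betaOf u ^ 2)
    else if j' = 0 then -(u j) / betaOf u ^ 2
    else (if j = j' then 1 / u 0 else 0) + u j * u j' / (betaOf u ^ 2 * u 0)

lemma arrow_mul_W {u : Fin (m + 1) → ℝ} (hu : tailNorm u < u 0) :
    arrowBlk u * Wblk u = 1 := by
  have h0 : u 0 ≠ 0 := (u0_pos hu).ne'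
  have hβ : betaOf u ≠ 0 := (beta_pos hu).ne'
  have hβ2 : betaOf u ^ 2 = u 0 ^ 2 - tailNormSq u := beta_sq hu
  ext j j'
  rw [Matrix.mul_apply, Fin.sum_univ_succ]
  refine Fin.cases ?_ (fun a => ?_) j
  · refine Fin.cases ?_ (fun b => ?_) j'
    · have hent : ∀ l : Fin m, arrowBlk u 0 l.succ * Wblk u l.succ 0
          = -(u l.succ ^ 2 / betaOf u ^ 2) := fun l => by
        simp only [arrowBlk, Wblk, Matrix.of_apply, Fin.succ_ne_zero, if_true, if_false]
        ring
      rw [Finset.sum_congr rfl fun l _ => hent l, Finset.sum_neg_distrib, ← Finset.sum_div]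
      have ht : ∑ l : Fin m, u l.succ ^ 2 = tailNormSq u := rfl
      simp only [arrowBlk, Wblk, Matrix.of_apply, if_true, Matrix.one_apply_eq, ht]
      rw [tailNormSq_eq hu]
      field_simp
      ring
    · have hent : ∀ l : Fin m, arrowBlk u 0 l.succ * Wblk u l.succ b.succ
          = (if l = b then u b.succ / u 0 else 0)
            + u l.succ ^ 2 * (u b.succ / (betaOf u ^ 2 * u 0)) := fun l => by
        simp only [arrowBlk, Wblk, Matrix.of_apply, Fin.succ_ne_zero, if_false, Fin.succ_inj]
        split_ifs <;> subst_vars <;> ring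
      rw [Finset.sum_congr rfl fun l _ => hent l, Finset.sum_add_distrib,
        Finset.sum_ite_eq' Finset.univ b, ← Finset.sum_mul]
      have ht : ∑ l : Fin m, u l.succ ^ 2 = tailNormSq u := rfl
      simp only [Finset.mem_univ, if_true, ht]
      have h1 : (1 : Matrix (Fin (m+1)) (Fin (m+1)) ℝ) 0 b.succ = 0 :=
        Matrix.one_apply_ne (Fin.succ_ne_zero b).symm
      simp only [arrowBlk, Wblk, Matrix.of_apply, if_true, Fin.succ_ne_zero, if_false, h1]
      rw [tailNormSq_eq hu]
      field_simp
      ring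
  · refine Fin.cases ?_ (fun b => ?_) j'
    · have hent : ∀ l : Fin m, arrowBlk u a.succ l.succ * Wblk u l.succ 0
          = if a = l then u 0 * (-(u l.succ) / betaOf u ^ 2) else 0 := fun l => by
        simp only [arrowBlk, Wblk, Matrix.of_apply, Fin.succ_ne_zero, if_false, Fin.succ_inj]
        split_ifs <;> ring
      rw [Finset.sum_congr rfl fun l _ => hent l, Finset.sum_ite_eq Finset.univ a]
      have h1 : (1 : Matrix (Fin (m+1)) (Fin (m+1)) ℝ) a.succ 0 = 0 :=
        Matrix.one_apply_ne (Fin.succ_ne_zero a)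
      simp only [arrowBlk, Wblk, Matrix.of_apply, Fin.succ_ne_zero, if_false, if_true,
        Finset.mem_univ, h1]
      field_simp
      ring
    · have hent : ∀ l : Fin m, arrowBlk u a.succ l.succ * Wblk u l.succ b.succ
          = if a = l then u 0 * ((if l.succ = b.succ then 1 / u 0 else 0)
              + u l.succ * u b.succ / (betaOf u ^ 2 * u 0)) else 0 := fun l => by
        simp only [arrowBlk, Matrix.of_apply, Fin.succ_ne_zero, if_false, Fin.succ_inj]
        split_ifs <;> simp_all [Wblk, Fin.succ_ne_zero]
      rw [Finset.sum_congr rfl fun l _ => hent l, Finset.sum_ite_eq Finset.univ a]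
      simp only [Finset.mem_univ, if_true, Fin.succ_inj]
      have h1 : (1 : Matrix (Fin (m+1)) (Fin (m+1)) ℝ) a.succ b.succ
          = if a = b then 1 else 0 := by
        rcases eq_or_ne a b with rfl | h
        · simp
        · rw [Matrix.one_apply_ne (by simpa [Fin.succ_inj] using h), if_neg h]
      simp only [arrowBlk, Wblk, Matrix.of_apply, Fin.succ_ne_zero, if_false, if_true, h1]
      split_ifs with h
      · field_simp
        ring
      · field_simp
        ring

lemma W_mul_arrow {u : Fin (m + 1) → ℝ} (hu : tailNorm u < u 0) :
    Wblk u * arrowBlk u = 1 :=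
  mul_eq_one_comm.mp (arrow_mul_W hu)

lemma M_mul_arrow {u : Fin (m + 1) → ℝ} (hu : tailNorm u < u 0) :
    ((1 : Matrix (Fin (m + 1)) (Fin (m + 1)) ℝ) - (u 0)⁻¹ • Ublk u) * arrowBlk u
      = Tblk u := by
  have h0 : u 0 ≠ 0 := (u0_pos hu).ne'
  rw [Matrix.sub_mul, Matrix.one_mul, Matrix.smul_mul, U_mul_arrow hu, smul_smul,
    inv_mul_cancel₀ h0, one_smul, ← arrow_sub_T hu, sub_sub_cancel]

lemma arrow_mul_M {u : Fin (m + 1) → ℝ} (hu : tailNorm u < u 0) :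
    arrowBlk u * ((1 : Matrix (Fin (m + 1)) (Fin (m + 1)) ℝ) - (u 0)⁻¹ • Ublk u)
      = Tblk u := by
  have h0 : u 0 ≠ 0 := (u0_pos hu).ne'
  rw [Matrix.mul_sub, Matrix.mul_one, Matrix.mul_smul, arrow_mul_U hu, smul_smul,
    inv_mul_cancel₀ h0, one_smul, ← arrow_sub_T hu, sub_sub_cancel]

lemma T_mul_W {u : Fin (m + 1) → ℝ} (hu : tailNorm u < u 0) :
    Tblk u * Wblk u = (1 : Matrix (Fin (m + 1)) (Fin (m + 1)) ℝ) - (u 0)⁻¹ • Ublk u := by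
  rw [← M_mul_arrow hu, Matrix.mul_assoc, arrow_mul_W hu, Matrix.mul_one]

lemma W_mul_T {u : Fin (m + 1) → ℝ} (hu : tailNorm u < u 0) :
    Wblk u * Tblk u = (1 : Matrix (Fin (m + 1)) (Fin (m + 1)) ℝ) - (u 0)⁻¹ • Ublk u := by
  rw [← arrow_mul_M hu, ← Matrix.mul_assoc, W_mul_arrow hu, Matrix.one_mul]

lemma arrow_T_comm {u : Fin (m + 1) → ℝ} (hu : tailNorm u < u 0) :
    arrowBlk u * Tblk u = Tblk u * arrowBlk u := by
  have h : arrowBlk u * Tblk u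
      = (arrowBlk u * ((1 : Matrix (Fin (m + 1)) (Fin (m + 1)) ℝ) - (u 0)⁻¹ • Ublk u))
        * arrowBlk u := by
    rw [Matrix.mul_assoc, M_mul_arrow hu]
  rw [h, arrow_mul_M hu]

lemma Ublk_zero_of {u : Fin (m + 1) → ℝ} (ht : tailNormSq u = 0) : Ublk u = 0 := by
  ext j j'
  simp [Ublk, ht]

lemma Ublk_mulVec_zero (u : Fin (m + 1) → ℝ) (v : Fin (m + 1) → ℝ) :
    (Ublk u).mulVec v 0 = 0 := by
  rw [Matrix.mulVec]
  exact Finset.sum_eq_zero fun b _ => by simp [Ublk]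

lemma Ublk_mulVec_succ {u : Fin (m + 1) → ℝ} (ht : tailNormSq u ≠ 0)
    (v : Fin (m + 1) → ℝ) (j : Fin m) :
    (Ublk u).mulVec v j.succ
      = (u 0 - betaOf u) * (v j.succ
          - u j.succ * (∑ b : Fin m, u b.succ * v b.succ) / tailNormSq u) := by
  rw [Matrix.mulVec, dotProduct, Fin.sum_univ_succ]
  have h0 : Ublk u j.succ 0 * v 0 = 0 := by simp [Ublk]
  rw [h0, zero_add]
  have hent : ∀ b : Fin m, Ublk u j.succ b.succ * v b.succ
      = (if j = b then (u 0 - betaOf u) * v b.succ else 0)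
        - ((u 0 - betaOf u) * u j.succ / tailNormSq u) * (u b.succ * v b.succ) := by
    intro b
    simp only [Ublk, Matrix.of_apply, Fin.succ_ne_zero, or_self, if_false, if_neg ht,
      Fin.succ_inj]
    split_ifs with h
    · subst h; ring
    · ring
  rw [Finset.sum_congr rfl fun b _ => hent b, Finset.sum_sub_distrib,
    Finset.sum_ite_eq Finset.univ j, ← Finset.mul_sum]
  simp only [Finset.mem_univ, if_true]
  ring

lemma Ublk_quad_nonneg {u : Fin (m + 1) → ℝ} (hu : tailNorm u < u 0)
    (v : Fin (m + 1) → ℝ) : 0 ≤ v ⬝ᵥ (Ublk u).mulVec v := by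
  rcases eq_or_ne (tailNormSq u) 0 with ht | ht
  · rw [Ublk_zero_of ht]; simp
  have ht' : 0 < tailNormSq u := (tailNormSq_nonneg u).lt_of_ne (Ne.symm ht)
  have hβle := beta_le hu
  set S := ∑ b : Fin m, u b.succ * v b.succ with hS
  set Q := ∑ b : Fin m, v b.succ ^ 2 with hQ
  have hCS : S ^ 2 ≤ tailNormSq u * Q := by
    have := Finset.sum_mul_sq_le_sq_mul_sq Finset.univ (fun b : Fin m => u b.succ)
      (fun b : Fin m => v b.succ)
    simpa [hS, hQ, tailNormSq] using this
  rw [dotProduct, Fin.sum_univ_succ, Ublk_mulVec_zero, mul_zero, zero_add]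
  have hent : ∀ j : Fin m, v j.succ * (Ublk u).mulVec v j.succ
      = (u 0 - betaOf u) * v j.succ ^ 2
        - ((u 0 - betaOf u) * S / tailNormSq u) * (u j.succ * v j.succ) := by
    intro j
    rw [Ublk_mulVec_succ ht]
    ring
  rw [Finset.sum_congr rfl fun j _ => hent j, Finset.sum_sub_distrib, ← Finset.mul_sum,
    ← Finset.mul_sum, ← hQ, ← hS]
  have heq : (u 0 - betaOf u) * Q - (u 0 - betaOf u) * S / tailNormSq u * S
      = (u 0 - betaOf u) * (tailNormSq u * Q - S ^ 2) / tailNormSq u := by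
    field_simp
  rw [heq]
  apply div_nonneg _ ht'.le
  apply mul_nonneg (by linarith)
  linarith

end AuxBlock

section AuxBlockDiag

lemma bd_mulVec {o : Type*} [Fintype o] [DecidableEq o] {m' : o → Type*}
    [∀ i, Fintype (m' i)] [∀ i, DecidableEq (m' i)]
    (M : ∀ i, Matrix (m' i) (m' i) ℝ) (v : (Σ i, m' i) → ℝ) (i : o) (j : m' i) :
    (Matrix.blockDiagonal' M).mulVec v ⟨i, j⟩ = (M i).mulVec (fun j' => v ⟨i, j'⟩) j := by
  rw [Matrix.mulVec, Matrix.mulVec, dotProduct, dotProduct, ← Finset.univ_sigma_univ,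
    Finset.sum_sigma]
  rw [Fintype.sum_eq_single i]
  · exact Finset.sum_congr rfl fun j' _ => by rw [Matrix.blockDiagonal'_apply_eq]
  · intro i' hi'
    exact Finset.sum_eq_zero fun j' _ => by
      rw [Matrix.blockDiagonal'_apply_ne _ _ _ (Ne.symm hi'), zero_mul]

end AuxBlockDiag

/-- Lemma 1: relations between the arrow-head matrix `X = mat(x)` and `T_x`. -/
theorem arrow_T_relations {k : ℕ} {d : Fin k → ℕ}
    (x : Idx d → ℝ) (hx : inIntK x) :
    matV x - TV x = UV x ∧
    TV x * (matV x)⁻¹ = (matV x)⁻¹ * TV x ∧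
    TV x * (matV x)⁻¹ =
      Matrix.blockDiagonal'
        (fun i => (1 : Matrix (Fin (d i + 1)) (Fin (d i + 1)) ℝ)
          - (x ⟨i, 0⟩)⁻¹ • Ublk (blk x i)) ∧
    (TV x * (matV x)⁻¹).mulVec unitE = unitE ∧
    matV x * TV x = TV x * matV x ∧
    (matV x - TV x).PosSemidef := by
  have hb : ∀ i, tailNorm (blk x i) < blk x i 0 := fun i => hx i
  have part1 : matV x - TV x = UV x := by
    have h : (fun i => arrowBlk (blk x i)) - (fun i => Tblk (blk x i))
        = fun i => Ublk (blk x i) := funext fun i => arrow_sub_T (hb i)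
    calc matV x - TV x
        = Matrix.blockDiagonal'
            ((fun i => arrowBlk (blk x i)) - fun i => Tblk (blk x i)) :=
          (Matrix.blockDiagonal'_sub _ _).symm
      _ = UV x := by rw [h]; rfl
  have hWinv : matV x * Matrix.blockDiagonal' (fun i => Wblk (blk x i)) = 1 := by
    rw [matV, ← Matrix.blockDiagonal'_mul]
    have h : (fun i => arrowBlk (blk x i) * Wblk (blk x i))
        = (1 : ∀ i, Matrix (Fin (d i + 1)) (Fin (d i + 1)) ℝ) :=
      funext fun i => arrow_mul_W (hb i)
    rw [h, Matrix.blockDiagonal'_one]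
  have hinv : (matV x)⁻¹ = Matrix.blockDiagonal' (fun i => Wblk (blk x i)) :=
    Matrix.inv_eq_right_inv hWinv
  have part3 : TV x * (matV x)⁻¹ =
      Matrix.blockDiagonal'
        (fun i => (1 : Matrix (Fin (d i + 1)) (Fin (d i + 1)) ℝ)
          - (x ⟨i, 0⟩)⁻¹ • Ublk (blk x i)) := by
    rw [hinv, TV, ← Matrix.blockDiagonal'_mul]
    exact congrArg _ (funext fun i => T_mul_W (hb i))
  have part2 : TV x * (matV x)⁻¹ = (matV x)⁻¹ * TV x := by
    rw [part3, hinv, TV, ← Matrix.blockDiagonal'_mul]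
    exact congrArg _ (funext fun i => (W_mul_T (hb i)).symm)
  have part4 : (TV x * (matV x)⁻¹).mulVec unitE = unitE := by
    rw [part3]
    funext a
    obtain ⟨i, j⟩ := a
    rw [bd_mulVec]
    show ((1 : Matrix (Fin (d i + 1)) (Fin (d i + 1)) ℝ)
        - (x ⟨i, 0⟩)⁻¹ • Ublk (blk x i)).mulVec
        (fun j' => unitE (⟨i, j'⟩ : Idx d)) j = unitE (⟨i, j⟩ : Idx d)
    rw [Matrix.mulVec, dotProduct]
    have hterm : ∀ b : Fin (d i + 1),
        ((1 : Matrix (Fin (d i + 1)) (Fin (d i + 1)) ℝ)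
          - (x ⟨i, 0⟩)⁻¹ • Ublk (blk x i)) j b * unitE (⟨i, b⟩ : Idx d)
        = if b = 0 then ((1 : Matrix (Fin (d i + 1)) (Fin (d i + 1)) ℝ)
          - (x ⟨i, 0⟩)⁻¹ • Ublk (blk x i)) j b else 0 := by
      intro b
      simp only [unitE]
      split_ifs <;> simp
    rw [Finset.sum_congr rfl fun b _ => hterm b, Finset.sum_ite_eq' Finset.univ 0]
    have hU0 : Ublk (blk x i) j 0 = 0 := by simp [Ublk]
    simp only [Finset.mem_univ, if_true, Matrix.sub_apply, Matrix.smul_apply, hU0,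
      smul_eq_mul, mul_zero, sub_zero, unitE, Matrix.one_apply]
  have part5 : matV x * TV x = TV x * matV x := by
    rw [matV, TV, ← Matrix.blockDiagonal'_mul, ← Matrix.blockDiagonal'_mul]
    exact congrArg _ (funext fun i => arrow_T_comm (hb i))
  have part6 : (matV x - TV x).PosSemidef := by
    rw [part1]
    refine Matrix.posSemidef_iff_dotProduct_mulVec.mpr ⟨?_, ?_⟩
    · have hT : (UV x)ᵀ = UV x := by
        rw [UV, Matrix.blockDiagonal'_transpose]
        exact congrArg _ (funext fun i => Ublk_transpose (blk x i))
      ext a b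
      rw [Matrix.conjTranspose_apply, star_trivial]
      conv_rhs => rw [← hT]
      rfl
    · intro v
      rw [star_trivial, dotProduct, ← Finset.univ_sigma_univ, Finset.sum_sigma]
      refine Finset.sum_nonneg fun i _ => ?_
      have h : ∀ j : Fin (d i + 1),
          v ⟨i, j⟩ * (UV x).mulVec v ⟨i, j⟩
            = blk v i j * (Ublk (blk x i)).mulVec (blk v i) j := fun j => by
        rw [UV, bd_mulVec]; rfl
      rw [Finset.sum_congr rfl fun j _ => h j]
      exact Ublk_quad_nonneg (hb i) (blk v i)
  exact ⟨part1, part2, part3, part4, part5, part6⟩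
end SOCP
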